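/- Let the weight of edge (u,v) be decreased to w'(u,v), and for a given pair of vertices s, t let D(s,t) = d(s,u) + w'(u,v) + d(v,t). Then: (1) if d(s,t) < D(s,t), then d'(s,t) = d(s,t) and σ'_{st} = σ_{st}; (2) if d(s,t) = D(s,t), then d'(s,t) = d(s,t) and σ'_{st} = σ_{st} + σ_{su} · σ_{vt}; (3) if d(s,t) > D(s,t), then d'(s,t) = D(s,t) and σ'_{st} = σ_{su} · σ_{vt}. -/

import Mathlib

open scoped ENNReal

namespace BC

variable {V : Type*}

/-- `p` is a path from `s` to `t` in the weighted digraph with weight function `w`;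
an edge is present iff its weight is not `⊤`. -/
def IsPath (w : V → V → ℝ≥0∞) (s t : V) (p : List V) : Prop :=
  p ≠ [] ∧ p.head? = some s ∧ p.getLast? = some t ∧ p.Chain' (fun a b => w a b ≠ ⊤)

/-- The weight of a path: the sum of the weights of its consecutive edges. -/
noncomputable def pWeight (w : V → V → ℝ≥0∞) (p : List V) : ℝ≥0∞ :=
  ((p.zip p.tail).map fun e => w e.1 e.2).sum

/-- The shortest-path distance `d(s,t)` (equal to `⊤` if no path exists). -/
noncomputable def dist (w : V → V → ℝ≥0∞) (s t : V) : ℝ≥0∞ :=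
  ⨅ p ∈ {p | IsPath w s t p}, pWeight w p

/-- `p` is a shortest path from `s` to `t`. -/
def IsShortest (w : V → V → ℝ≥0∞) (s t : V) (p : List V) : Prop :=
  IsPath w s t p ∧ pWeight w p = dist w s t

/-- `σ_{st}`: the number of shortest paths from `s` to `t`. -/
noncomputable def nsp (w : V → V → ℝ≥0∞) (s t : V) : ℕ :=
  Set.ncard {p | IsShortest w s t p}

/-- `σ_{st}(x)`: the number of shortest paths from `s` to `t` passing through `x`. -/
noncomputable def nspVia (w : V → V → ℝ≥0∞) (s t x : V) : ℕ :=
  Set.ncard {p | IsShortest w s t p ∧ x ∈ p}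

/-- The directed edge `(a,b)` lies on the path `p`. -/
def edgeOn (p : List V) (a b : V) : Prop := (a, b) ∈ p.zip p.tail

/-- The shortest-path DAG rooted at `s`: the edges lying on shortest paths from `s`. -/
def dagSet (w : V → V → ℝ≥0∞) (s : V) : Set (V × V) :=
  {e | w e.1 e.2 ≠ ⊤ ∧ dist w s e.1 ≠ ⊤ ∧ dist w s e.1 + w e.1 e.2 = dist w s e.2}

section Aux

variable {w wa wb : V → V → ℝ≥0∞} {s t u v : V} {p q : List V}

lemma chain'_iff_zip {R : V → V → Prop} :
    ∀ {p : List V}, p.Chain' R ↔ ∀ e ∈ p.zip p.tail, R e.1 e.2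
  | [] => by simp [List.Chain', List.isChain_nil]
  | [a] => by simp [List.Chain', List.isChain_singleton]
  | a :: b :: l => by
    rw [List.Chain', List.isChain_cons_cons, show List.IsChain R (b :: l) ↔ _ from chain'_iff_zip (p := b :: l)]
    simp only [List.tail_cons, List.zip_cons_cons, List.mem_cons, forall_eq_or_imp]

lemma zip_append {a b : V} :
    ∀ {p : List V}, p.getLast? = some a → q.head? = some b →
      (p ++ q).zip (p ++ q).tail = p.zip p.tail ++ ((a, b) :: q.zip q.tail)
  | [], h, _ => by simp at h
  | [x], h, hb => by
    match q, hb with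
    | y :: l, hb =>
      simp only [List.getLast?_singleton, Option.some_inj] at h
      simp only [List.head?_cons, Option.some_inj] at hb
      subst h; subst hb
      simp
  | x :: y :: l, h, hb => by
    rw [List.getLast?_cons_cons] at h
    have ih := zip_append (p := y :: l) h hb
    simp only [List.cons_append, List.tail_cons, List.zip_cons_cons] at ih ⊢
    rw [ih]

lemma pWeight_append {a b : V} (ha : p.getLast? = some a) (hb : q.head? = some b) :
    pWeight w (p ++ q) = pWeight w p + w a b + pWeight w q := by
  unfold pWeight
  rw [zip_append ha hb, List.map_append, List.sum_append, List.map_cons, List.sum_cons]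
  ring

lemma IsPath.append (h1 : IsPath w s u p) (h2 : IsPath w v t q) (huv : w u v ≠ ⊤) :
    IsPath w s t (p ++ q) := by
  obtain ⟨hp, h1h, h1l, h1c⟩ := h1
  obtain ⟨hq, h2h, h2l, h2c⟩ := h2
  refine ⟨by simp [hp], ?_, ?_, ?_⟩
  · rw [List.head?_append_of_ne_nil _ hp]; exact h1h
  · rw [List.getLast?_append_of_ne_nil _ hq]; exact h2l
  · refine List.isChain_append.mpr ⟨h1c, h2c, ?_⟩
    intro x hx y hy
    rw [h1l] at hx; rw [h2h] at hy
    simp only [Option.mem_def, Option.some_inj] at hx hy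
    subst hx; subst hy; exact huv

lemma pWeight_congr (h : ∀ e ∈ p.zip p.tail, wa e.1 e.2 = wb e.1 e.2) :
    pWeight wa p = pWeight wb p := by
  unfold pWeight
  exact congrArg List.sum (List.map_congr_left h)

lemma isPath_congr (h : ∀ e ∈ p.zip p.tail, wa e.1 e.2 = wb e.1 e.2) :
    IsPath wa s t p ↔ IsPath wb s t p := by
  unfold IsPath
  rw [chain'_iff_zip, chain'_iff_zip]
  constructor <;> rintro ⟨h1, h2, h3, h4⟩ <;> refine ⟨h1, h2, h3, fun e he => ?_⟩
  · rw [← h e he]; exact h4 e he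
  · rw [h e he]; exact h4 e he

lemma isPath_mono (hle : ∀ a b, wa a b ≤ wb a b) (h : IsPath wb s t p) : IsPath wa s t p := by
  obtain ⟨h1, h2, h3, h4⟩ := h
  refine ⟨h1, h2, h3, ?_⟩
  rw [chain'_iff_zip] at h4 ⊢
  intro e he
  exact fun htop => h4 e he (top_le_iff.mp (htop ▸ hle e.1 e.2))

lemma pWeight_mono (hle : ∀ a b, wa a b ≤ wb a b) (p : List V) :
    pWeight wa p ≤ pWeight wb p :=
  List.sum_le_sum fun e _ => hle e.1 e.2

lemma dist_le (h : IsPath w s t p) : dist w s t ≤ pWeight w p := by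
  unfold dist
  exact iInf₂_le p h

lemma dist_mono (hle : ∀ a b, wa a b ≤ wb a b) : dist wa s t ≤ dist wb s t := by
  unfold dist
  exact le_iInf₂ fun p hp => (dist_le (isPath_mono hle hp)).trans (pWeight_mono hle p)

lemma list_sum_ne_top {l : List ℝ≥0∞} (h : ∀ x ∈ l, x ≠ ⊤) : l.sum ≠ ⊤ := by
  induction l with
  | nil => simp
  | cons a l ih =>
    simp only [List.sum_cons]
    exact ENNReal.add_ne_top.mpr ⟨h a (by simp), ih fun x hx => h x (by simp [hx])⟩

lemma IsPath.pWeight_ne_top (h : IsPath w s t p) : pWeight w p ≠ ⊤ := by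
  apply list_sum_ne_top
  intro x hx
  simp only [List.mem_map] at hx
  obtain ⟨e, he, rfl⟩ := hx
  exact (chain'_iff_zip.mp h.2.2.2) e he

lemma shortest_empty (h : dist w s t = ⊤) : {p | IsShortest w s t p} = ∅ := by
  ext p
  simp only [Set.mem_setOf_eq, Set.mem_empty_iff_false, iff_false]
  rintro ⟨hp, hw⟩
  exact hp.pWeight_ne_top (hw.trans h)

lemma pWeight_ge {ε : ℝ≥0∞} (hε : ∀ a b, ε ≤ w a b) (p : List V) :
    (p.length - 1) • ε ≤ pWeight w p := by
  have hlen : ((p.zip p.tail).map fun e => w e.1 e.2).length = p.length - 1 := by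
    rw [List.length_map, List.length_zip, List.length_tail]
    omega
  rw [← hlen]
  refine List.card_nsmul_le_sum _ _ ?_
  intro x hx
  simp only [List.mem_map] at hx
  obtain ⟨e, _, rfl⟩ := hx
  exact hε e.1 e.2

lemma length_bound [Fintype V] (hpos : ∀ a b, 0 < w a b) (s t : V) (hd : dist w s t ≠ ⊤) :
    ∃ (N : ℕ) (X : ℝ≥0∞), dist w s t < X ∧ ∀ p : List V, N < p.length → X ≤ pWeight w p := by
  obtain ⟨e, -, he⟩ := Finset.exists_min_image (Finset.univ : Finset (V × V))
    (fun e => w e.1 e.2) ⟨(s, s), Finset.mem_univ _⟩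
  set ε : ℝ≥0∞ := min 1 (w e.1 e.2) with hεdef
  have hε0 : ε ≠ 0 := (lt_min one_pos (hpos _ _)).ne'
  have hεtop : ε ≠ ⊤ := ne_top_of_le_ne_top ENNReal.one_ne_top (min_le_left _ _)
  have hε : ∀ a b, ε ≤ w a b := fun a b =>
    le_trans (min_le_right _ _) (he (a, b) (Finset.mem_univ _))
  obtain ⟨n, hn⟩ := ENNReal.exists_nat_gt (show dist w s t / ε ≠ ⊤ from
    (ENNReal.div_lt_top hd hε0).ne)
  have hX : dist w s t < n * ε :=
    (ENNReal.div_lt_iff (Or.inl hε0) (Or.inl hεtop)).mp hn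
  refine ⟨n, n * ε, hX, fun p hp => ?_⟩
  calc (n : ℝ≥0∞) * ε ≤ (p.length - 1 : ℕ) * ε := by
        gcongr
        exact_mod_cast by omega
  _ = (p.length - 1) • ε := (nsmul_eq_mul _ _).symm
  _ ≤ pWeight w p := pWeight_ge hε p

lemma shortest_finite [Fintype V] (s t : V) (hpos : ∀ a b, 0 < w a b) :
    {p | IsShortest w s t p}.Finite := by
  by_cases hd : dist w s t = ⊤
  · rw [shortest_empty hd]; exact Set.finite_empty
  · obtain ⟨N, X, hX, hN⟩ := length_bound hpos s t hd
    apply (List.finite_length_le V N).subset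
    rintro p ⟨hp, hw⟩
    simp only [Set.mem_setOf_eq]
    by_contra h
    push_neg at h
    exact absurd (hw ▸ hN p h) hX.not_ge

lemma exists_shortest [Fintype V] (s t : V) (hpos : ∀ a b, 0 < w a b) (hd : dist w s t ≠ ⊤) :
    ∃ p, IsShortest w s t p := by
  obtain ⟨N, X, hX, hN⟩ := length_bound hpos s t hd
  set S : Set (List V) := {p | IsPath w s t p ∧ p.length ≤ N} with hSdef
  have hSfin : S.Finite := (List.finite_length_le V N).subset fun p hp => hp.2
  have hinf : ⨅ p ∈ S, pWeight w p = dist w s t := by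
    apply le_antisymm
    · by_contra hcon
      push_neg at hcon
      have hmin : min (⨅ p ∈ S, pWeight w p) X ≤ dist w s t := by
        unfold dist
        refine le_iInf₂ fun p hp => ?_
        by_cases hl : p.length ≤ N
        · exact le_trans (min_le_left _ _) (iInf₂_le p ⟨hp, hl⟩)
        · exact le_trans (min_le_right _ _) (hN p (by omega))
      rcases min_le_iff.mp hmin with h | h
      · exact absurd h hcon.not_ge
      · exact absurd h hX.not_ge
    · exact le_iInf₂ fun p hp => dist_le hp.1
  have hSne : S.Nonempty := by
    rcases S.eq_empty_or_nonempty with hS | hS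
    · exfalso
      rw [hS] at hinf
      simp at hinf
      exact hd hinf.symm
    · exact hS
  have hmem : sInf (pWeight w '' S) ∈ pWeight w '' S :=
    Set.Nonempty.csInf_mem (hSne.image _) (hSfin.image _)
  rw [sInf_image, hinf] at hmem
  obtain ⟨p, hp, hpw⟩ := hmem
  exact ⟨p, hp.1, hpw⟩

lemma split_first :
    ∀ {p : List V} {s : V}, IsPath w s t p → edgeOn p u v →
    ∃ p1 p2, p = p1 ++ p2 ∧ IsPath w s u p1 ∧ IsPath w v t p2 ∧ ¬ edgeOn p1 u v := by
  intro p
  induction p with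
  | nil => intro s h _; exact absurd rfl h.1
  | cons a l ih =>
    intro s h he
    obtain ⟨-, hh, hl, hc⟩ := h
    simp only [List.head?_cons, Option.some_inj] at hh
    subst hh
    match l with
    | [] => simp [edgeOn] at he
    | b :: l' =>
      simp only [List.Chain', List.isChain_cons_cons] at hc
      rw [List.getLast?_cons_cons] at hl
      by_cases hab : (a, b) = (u, v)
      · rw [Prod.mk.injEq] at hab
        obtain ⟨rfl, rfl⟩ := hab
        exact ⟨[a], b :: l', rfl, ⟨by simp, by simp, by simp, by simp [List.Chain']⟩,
          ⟨by simp, by simp, hl, hc.2⟩, by simp [edgeOn]⟩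
      · have he' : edgeOn (b :: l') u v := by
          simp only [edgeOn, List.tail_cons, List.zip_cons_cons, List.mem_cons] at he ⊢
          rcases he with h1 | h1
          · exact absurd h1.symm hab
          · exact h1
        obtain ⟨q1, q2, heq, hq1, hq2, hq1e⟩ :=
          ih (s := b) ⟨by simp, by simp, hl, hc.2⟩ he'
        obtain ⟨y, ys, rfl⟩ := List.exists_cons_of_ne_nil hq1.1
        have hyb : y = b := by
          have := hq1.2.1
          simp only [List.head?_cons, Option.some_inj] at this
          exact this
        subst hyb
        refine ⟨a :: y :: ys, q2, by rw [List.cons_append, ← heq], ?_, hq2, ?_⟩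
        · refine ⟨by simp, by simp, ?_, ?_⟩
          · rw [List.getLast?_cons_cons]; exact hq1.2.2.1
          · exact List.isChain_cons_cons.mpr ⟨hc.1, hq1.2.2.2⟩
        · simp only [edgeOn, List.tail_cons, List.zip_cons_cons, List.mem_cons] at hq1e ⊢
          rintro (h1 | h1)
          · exact hab h1.symm
          · exact hq1e h1

lemma unique_middle {α : Type*} {a : α} :
    ∀ {l1 l3 : List α} {l2 l4 : List α}, l1 ++ a :: l2 = l3 ++ a :: l4 →
      a ∉ l1 → a ∉ l3 → l1 = l3 ∧ l2 = l4 := by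
  intro l1
  induction l1 with
  | nil =>
    intro l3 l2 l4 h h1 h3
    match l3 with
    | [] => simpa using h
    | x :: l3' =>
      simp only [List.nil_append, List.cons_append, List.cons.injEq] at h
      exact absurd (h.1 ▸ List.mem_cons_self (a := x) (l := l3')) (h.1 ▸ h3)
  | cons x l1' ih =>
    intro l3 l2 l4 h h1 h3
    match l3 with
    | [] =>
      simp only [List.nil_append, List.cons_append, List.cons.injEq] at h
      exact absurd (h.1 ▸ List.mem_cons_self (a := x) (l := l1')) (h.1 ▸ h1)
    | y :: l3' =>
      simp only [List.cons_append, List.cons.injEq] at h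
      obtain ⟨rfl, h2⟩ := h
      obtain ⟨rfl, rfl⟩ := ih h2 (fun hm => h1 (List.mem_cons_of_mem _ hm))
        (fun hm => h3 (List.mem_cons_of_mem _ hm))
      exact ⟨rfl, rfl⟩

lemma split_unique {p1 p2 q1 q2 : List V} (h : p1 ++ p2 = q1 ++ q2)
    (hp1 : p1.getLast? = some u) (hq1 : q1.getLast? = some u)
    (hp2 : p2.head? = some v) (hq2 : q2.head? = some v)
    (e1 : ¬ edgeOn p1 u v) (e2 : ¬ edgeOn p2 u v)
    (e3 : ¬ edgeOn q1 u v) (e4 : ¬ edgeOn q2 u v) :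
    p1 = q1 ∧ p2 = q2 := by
  have hz : p1.zip p1.tail ++ ((u, v) :: p2.zip p2.tail)
      = q1.zip q1.tail ++ ((u, v) :: q2.zip q2.tail) := by
    rw [← zip_append hp1 hp2, ← zip_append hq1 hq2, h]
  obtain ⟨hE, -⟩ := unique_middle hz e1 e3
  have hlen : p1.length = q1.length := by
    have h1 : (p1.zip p1.tail).length = p1.length - 1 := by
      rw [List.length_zip, List.length_tail]; omega
    have h2 : (q1.zip q1.tail).length = q1.length - 1 := by
      rw [List.length_zip, List.length_tail]; omega
    have hne1 : p1 ≠ [] := fun hh => by simp [hh] at hp1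
    have hne2 : q1 ≠ [] := fun hh => by simp [hh] at hq1
    have := congrArg List.length hE
    rw [h1, h2] at this
    have l1 : 0 < p1.length := List.length_pos_iff.mpr hne1
    have l2 : 0 < q1.length := List.length_pos_iff.mpr hne2
    omega
  exact List.append_inj h hlen

lemma w_shortest_lb (h : IsPath w s t p) (he : edgeOn p u v) :
    dist w s u + w u v + dist w v t ≤ pWeight w p := by
  obtain ⟨p1, p2, rfl, h1, h2, -⟩ := split_first h he
  rw [pWeight_append h1.2.2.1 h2.2.1]
  exact add_le_add (add_le_add (dist_le h1) le_rfl) (dist_le h2)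

lemma shortest_no_edge_left {x : V} (h0 : w u v ≠ 0)
    (hx : dist w x u ≠ ⊤) (h : IsShortest w x u p) : ¬ edgeOn p u v := by
  intro he
  obtain ⟨p1, p2, rfl, h1, h2, -⟩ := split_first h.1 he
  have hW := pWeight_append (w := w) (p := p1) (q := p2) h1.2.2.1 h2.2.1
  have hge : dist w x u + w u v ≤ pWeight w (p1 ++ p2) := by
    rw [hW]
    exact le_trans (add_le_add (dist_le h1) le_rfl) le_self_add
  rw [h.2] at hge
  exact absurd hge (ENNReal.lt_add_right hx h0).not_ge

lemma shortest_no_edge_right {y : V} (h0 : w u v ≠ 0)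
    (hy : dist w v y ≠ ⊤) (h : IsShortest w v y p) : ¬ edgeOn p u v := by
  intro he
  obtain ⟨p1, p2, rfl, h1, h2, -⟩ := split_first h.1 he
  have hge : w u v + dist w v y ≤ pWeight w (p1 ++ p2) := by
    rw [pWeight_append h1.2.2.1 h2.2.1]
    calc w u v + dist w v y ≤ w u v + pWeight w p2 := add_le_add le_rfl (dist_le h2)
    _ ≤ pWeight w p1 + w u v + pWeight w p2 := by
        rw [add_assoc]; exact le_add_self
  rw [h.2] at hge
  have : dist w v y < w u v + dist w v y := by
    rw [add_comm]; exact ENNReal.lt_add_right hy h0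
  exact absurd hge this.not_ge

lemma add_three_cancel {a a' b b' c : ℝ≥0∞} (h : a + c + b = a' + c + b')
    (ha : a' ≤ a) (hb : b' ≤ b) (htop : a' + c + b' ≠ ⊤) : a = a' ∧ b = b' := by
  have h1 : a' + c + b = a' + c + b' := by
    apply le_antisymm
    · calc a' + c + b ≤ a + c + b := by gcongr
      _ = a' + c + b' := h
    · gcongr
  have hac : a' + c ≠ ⊤ := fun hh => htop (by rw [hh, top_add])
  have hbb : b = b' := (ENNReal.add_right_inj hac).mp h1
  refine ⟨?_, hbb⟩
  rw [hbb] at h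
  have hcb : c + b' ≠ ⊤ := fun hh => htop (by rw [add_assoc, hh, add_top])
  rw [add_assoc, add_assoc] at h
  exact (ENNReal.add_left_inj hcb).mp h

lemma ncard_prod {α β : Type*} (A : Set α) (B : Set β) :
    (A ×ˢ B).ncard = A.ncard * B.ncard := by
  rw [← Nat.card_coe_set_eq, ← Nat.card_coe_set_eq, ← Nat.card_coe_set_eq,
    ← Nat.card_prod]
  exact Nat.card_congr (Equiv.Set.prod A B)

lemma edge_congr {w w' : V → V → ℝ≥0∞} {u v : V}
    (hsame : ∀ a b : V, (a, b) ≠ (u, v) → w' a b = w a b)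
    (hne : ¬ edgeOn p u v) : ∀ e ∈ p.zip p.tail, w' e.1 e.2 = w e.1 e.2 := by
  intro e he
  refine hsame e.1 e.2 fun hc => hne ?_
  show (u, v) ∈ p.zip p.tail
  rw [← hc]
  simpa using he

lemma pWeight_transfer {w w' : V → V → ℝ≥0∞} {u v : V}
    (hsame : ∀ a b : V, (a, b) ≠ (u, v) → w' a b = w a b)
    (hne : ¬ edgeOn p u v) : pWeight w' p = pWeight w p :=
  pWeight_congr (edge_congr hsame hne)

lemma isPath_transfer {w w' : V → V → ℝ≥0∞} {u v : V}
    (hsame : ∀ a b : V, (a, b) ≠ (u, v) → w' a b = w a b)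
    (hne : ¬ edgeOn p u v) : IsPath w' s t p ↔ IsPath w s t p :=
  isPath_congr (edge_congr hsame hne)

lemma lower_bound {w w' : V → V → ℝ≥0∞} {u v : V}
    (hsame : ∀ a b : V, (a, b) ≠ (u, v) → w' a b = w a b) (t : V) :
    ∀ (n : ℕ) (p : List V) (s : V), p.length ≤ n → IsPath w' s t p →
      min (dist w s t) (dist w s u + w' u v + dist w v t) ≤ pWeight w' p := by
  intro n
  induction n with
  | zero =>
    intro p s hl hp
    exact absurd (List.length_eq_zero_iff.mp (Nat.le_zero.mp hl)) hp.1
  | succ n ih =>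
    intro p s hl hp
    by_cases he : edgeOn p u v
    · obtain ⟨p1, p2, rfl, h1, h2, hne⟩ := split_first hp he
      have h1w : IsPath w s u p1 := (isPath_transfer hsame hne).mp h1
      have hW : pWeight w' (p1 ++ p2) = pWeight w' p1 + w' u v + pWeight w' p2 :=
        pWeight_append h1.2.2.1 h2.2.1
      have hlen2 : p2.length ≤ n := by
        have hne1 : p1 ≠ [] := h1.1
        have := List.length_append (as := p1) (bs := p2)
        have l1 : 0 < p1.length := List.length_pos_iff.mpr hne1
        omega
      have hd2 : dist w v t ≤ pWeight w' p2 := by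
        have hmin := ih p2 v hlen2 h2
        rwa [min_eq_left (by exact le_add_self)] at hmin
      calc min (dist w s t) (dist w s u + w' u v + dist w v t)
          ≤ dist w s u + w' u v + dist w v t := min_le_right _ _
        _ ≤ pWeight w' p1 + w' u v + pWeight w' p2 := by
            refine add_le_add (add_le_add ?_ le_rfl) hd2
            rw [pWeight_transfer hsame hne]
            exact dist_le h1w
        _ = pWeight w' (p1 ++ p2) := hW.symm
    · have hpw : IsPath w s t p := (isPath_transfer hsame he).mp hp
      rw [pWeight_transfer hsame he]
      exact le_trans (min_le_left _ _) (dist_le hpw)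

lemma dist_update [Fintype V] {w w' : V → V → ℝ≥0∞} {u v : V}
    (hpos : ∀ a b, 0 < w a b) (hdec : w' u v < w u v)
    (hsame : ∀ a b : V, (a, b) ≠ (u, v) → w' a b = w a b) (s t : V) :
    dist w' s t = min (dist w s t) (dist w s u + w' u v + dist w v t) := by
  have hle : ∀ a b, w' a b ≤ w a b := by
    intro a b
    by_cases h : (a, b) = (u, v)
    · rw [Prod.mk.injEq] at h
      obtain ⟨rfl, rfl⟩ := h
      exact hdec.le
    · exact (hsame a b h).le
  apply le_antisymm
  · apply le_min
    · exact dist_mono hle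
    · by_cases h1 : dist w s u = ⊤
      · rw [h1, top_add, top_add]; exact le_top
      by_cases h2 : dist w v t = ⊤
      · rw [h2, add_top]; exact le_top
      obtain ⟨p1, hp1⟩ := exists_shortest s u hpos h1
      obtain ⟨p2, hp2⟩ := exists_shortest v t hpos h2
      have hap : IsPath w' s t (p1 ++ p2) :=
        (isPath_mono hle hp1.1).append (isPath_mono hle hp2.1) hdec.ne_top
      calc dist w' s t ≤ pWeight w' (p1 ++ p2) := dist_le hap
        _ = pWeight w' p1 + w' u v + pWeight w' p2 :=
            pWeight_append hp1.1.2.2.1 hp2.1.2.1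
        _ ≤ pWeight w p1 + w' u v + pWeight w p2 :=
            add_le_add (add_le_add (pWeight_mono hle p1) le_rfl) (pWeight_mono hle p2)
        _ = dist w s u + w' u v + dist w v t := by rw [hp1.2, hp2.2]
  · show _ ≤ dist w' s t
    unfold dist
    exact le_iInf₂ fun p hp => lower_bound hsame t p.length p s le_rfl hp

lemma countB [Fintype V] {w w' : V → V → ℝ≥0∞} {u v : V}
    (hpos : ∀ a b, 0 < w a b) (hpos' : ∀ a b, 0 < w' a b)
    (hdec : w' u v < w u v)
    (hsame : ∀ a b : V, (a, b) ≠ (u, v) → w' a b = w a b) (s t : V)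
    (hd' : dist w' s t = dist w s u + w' u v + dist w v t)
    (hDtop : dist w s u + w' u v + dist w v t ≠ ⊤) :
    {p | IsShortest w' s t p ∧ edgeOn p u v}.ncard = nsp w s u * nsp w v t := by
  have hsu : dist w s u ≠ ⊤ := by
    intro h; rw [h, top_add, top_add] at hDtop; exact hDtop rfl
  have hvt : dist w v t ≠ ⊤ := by
    intro h; rw [h, add_top] at hDtop; exact hDtop rfl
  have hCvt : dist w' v t = dist w v t := by
    rw [dist_update hpos hdec hsame v t]
    exact min_eq_left le_add_self
  have np1 : ∀ {p : List V}, IsShortest w s u p → ¬ edgeOn p u v :=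
    fun hp => shortest_no_edge_left (hpos u v).ne' hsu hp
  have np2 : ∀ {p : List V}, IsShortest w v t p → ¬ edgeOn p u v :=
    fun hp => shortest_no_edge_right (hpos u v).ne' hvt hp
  have np2' : ∀ {p : List V}, IsShortest w' v t p → ¬ edgeOn p u v :=
    fun hp => shortest_no_edge_right (hpos' u v).ne' (hCvt ▸ hvt) hp
  have hinj : Set.InjOn (fun q : List V × List V => q.1 ++ q.2)
      ({p | IsShortest w s u p} ×ˢ {p | IsShortest w v t p}) := by
    rintro ⟨p1, p2⟩ hp ⟨q1, q2⟩ hq hpq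
    simp only [Set.mem_prod, Set.mem_setOf_eq] at hp hq
    obtain ⟨hp1, hp2⟩ := hp
    obtain ⟨hq1, hq2⟩ := hq
    obtain ⟨h1, h2⟩ := split_unique hpq hp1.1.2.2.1 hq1.1.2.2.1 hp2.1.2.1 hq2.1.2.1
      (np1 hp1) (np2 hp2) (np1 hq1) (np2 hq2)
    exact Prod.ext h1 h2
  have hseteq : {p | IsShortest w' s t p ∧ edgeOn p u v} =
      (fun q : List V × List V => q.1 ++ q.2) ''
        ({p | IsShortest w s u p} ×ˢ {p | IsShortest w v t p}) := by
    ext p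
    simp only [Set.mem_setOf_eq, Set.mem_image, Set.mem_prod, Prod.exists]
    constructor
    · rintro ⟨⟨hpath, hwt⟩, he⟩
      obtain ⟨p1, p2, rfl, h1, h2, hne1⟩ := split_first hpath he
      have h1w : IsPath w s u p1 := (isPath_transfer hsame hne1).mp h1
      have hW : pWeight w' (p1 ++ p2) = pWeight w p1 + w' u v + pWeight w' p2 := by
        rw [pWeight_append h1.2.2.1 h2.2.1, pWeight_transfer hsame hne1]
      rw [hwt, hd'] at hW
      obtain ⟨hA, hB⟩ := add_three_cancel hW.symm (dist_le h1w) (hCvt ▸ dist_le h2) hDtop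
      have hp2short : IsShortest w' v t p2 := ⟨h2, hB.symm ▸ hCvt.symm⟩
      have hne2 : ¬ edgeOn p2 u v := np2' hp2short
      have h2w : IsPath w v t p2 := (isPath_transfer hsame hne2).mp h2
      refine ⟨p1, p2, ⟨⟨h1w, hA.symm ▸ rfl⟩, ⟨h2w, ?_⟩⟩, rfl⟩
      · rw [← pWeight_transfer hsame hne2, hB]
    · rintro ⟨p1, p2, ⟨hp1, hp2⟩, rfl⟩
      have hne1 : ¬ edgeOn p1 u v := np1 hp1
      have hne2 : ¬ edgeOn p2 u v := np2 hp2
      have h1' : IsPath w' s u p1 := (isPath_transfer hsame hne1).mpr hp1.1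
      have h2' : IsPath w' v t p2 := (isPath_transfer hsame hne2).mpr hp2.1
      refine ⟨⟨h1'.append h2' hdec.ne_top, ?_⟩, ?_⟩
      · rw [pWeight_append h1'.2.2.1 h2'.2.1, pWeight_transfer hsame hne1,
          pWeight_transfer hsame hne2, hp1.2, hp2.2, hd']
      · show (u, v) ∈ (p1 ++ p2).zip (p1 ++ p2).tail
        rw [zip_append hp1.1.2.2.1 hp2.1.2.1]
        exact List.mem_append_right _ List.mem_cons_self
  rw [hseteq, Set.ncard_image_of_injOn hinj, ncard_prod]
  rfl

end Aux

/-- Lemma 2: after decreasing the weight of `(u,v)` to `w'(u,v)`,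
with `D(s,t) = d(s,u) + w'(u,v) + d(v,t)`:
(1) if `d(s,t) < D(s,t)` then `d'(s,t) = d(s,t)` and `σ'_{st} = σ_{st}`;
(2) if `d(s,t) = D(s,t)` then `d'(s,t) = d(s,t)` and `σ'_{st} = σ_{st} + σ_{su}·σ_{vt}`;
(3) if `d(s,t) > D(s,t)` then `d'(s,t) = D(s,t)` and `σ'_{st} = σ_{su}·σ_{vt}`. -/
theorem incremental_update_dist_sigma [Fintype V] (w w' : V → V → ℝ≥0∞) (u v : V)
    (hpos : ∀ a b, 0 < w a b) (hpos' : ∀ a b, 0 < w' a b)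
    (hdec : w' u v < w u v)
    (hsame : ∀ a b : V, (a, b) ≠ (u, v) → w' a b = w a b) (s t : V) :
    (dist w s t < dist w s u + w' u v + dist w v t →
      dist w' s t = dist w s t ∧ nsp w' s t = nsp w s t) ∧
    (dist w s t = dist w s u + w' u v + dist w v t →
      dist w' s t = dist w s t ∧
      nsp w' s t = nsp w s t + nsp w s u * nsp w v t) ∧
    (dist w s u + w' u v + dist w v t < dist w s t →
      dist w' s t = dist w s u + w' u v + dist w v t ∧
      nsp w' s t = nsp w s u * nsp w v t) := by
  classical
  have hC := dist_update (w := w) (w' := w') hpos hdec hsame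
  have hCsu : dist w' s u = dist w s u := by
    rw [hC s u]
    refine min_eq_left ?_
    exact le_trans le_self_add le_self_add
  have hCvt : dist w' v t = dist w v t := by
    rw [hC v t]
    exact min_eq_left le_add_self
  refine ⟨?_, ?_, ?_⟩
  · -- Case 1 : d < D
    intro h
    have hd' : dist w' s t = dist w s t := by rw [hC s t]; exact min_eq_left h.le
    refine ⟨hd', ?_⟩
    have hseteq : {p | IsShortest w' s t p} = {p | IsShortest w s t p} := by
      ext p
      simp only [Set.mem_setOf_eq]
      constructor
      · rintro ⟨hp, hwt⟩
        have hne : ¬ edgeOn p u v := by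
          intro he
          have := w_shortest_lb (w := w') hp he
          rw [hCsu, hCvt, hwt, hd'] at this
          exact absurd (lt_of_lt_of_le h this) (lt_irrefl _)
        refine ⟨(isPath_transfer hsame hne).mp hp, ?_⟩
        rw [← pWeight_transfer hsame hne, hwt, hd']
      · rintro ⟨hp, hwt⟩
        have hne : ¬ edgeOn p u v := by
          intro he
          have hlb := w_shortest_lb (w := w) hp he
          have : dist w s u + w' u v + dist w v t ≤ dist w s u + w u v + dist w v t :=
            add_le_add (add_le_add le_rfl hdec.le) le_rfl
          rw [hwt] at hlb
          exact absurd (lt_of_lt_of_le h (le_trans this hlb)) (lt_irrefl _)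
        refine ⟨(isPath_transfer hsame hne).mpr hp, ?_⟩
        rw [pWeight_transfer hsame hne, hwt, hd']
    unfold nsp
    rw [hseteq]
  · -- Case 2 : d = D
    intro h
    have hd' : dist w' s t = dist w s t := by rw [hC s t, ← h, min_self]
    refine ⟨hd', ?_⟩
    by_cases hDtop : dist w s u + w' u v + dist w v t = ⊤
    · -- everything is empty / zero
      have hdtop : dist w s t = ⊤ := by rw [h]; exact hDtop
      have h1 : nsp w' s t = 0 := by
        unfold nsp
        rw [shortest_empty (hd'.trans hdtop), Set.ncard_empty]
      have h2 : nsp w s t = 0 := by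
        unfold nsp
        rw [shortest_empty hdtop, Set.ncard_empty]
      have h3 : nsp w s u * nsp w v t = 0 := by
        rcases ENNReal.add_eq_top.mp hDtop with h4 | h4
        · rcases ENNReal.add_eq_top.mp h4 with h5 | h5
          · have : nsp w s u = 0 := by
              unfold nsp; rw [shortest_empty h5, Set.ncard_empty]
            rw [this, zero_mul]
          · exact absurd h5 hdec.ne_top
        · have : nsp w v t = 0 := by
            unfold nsp; rw [shortest_empty h4, Set.ncard_empty]
          rw [this, mul_zero]
      rw [h1, h2, h3]
    · -- D finite
      have hsu : dist w s u ≠ ⊤ := by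
        intro h5; rw [h5, top_add, top_add] at hDtop; exact hDtop rfl
      have hvt : dist w v t ≠ ⊤ := by
        intro h5; rw [h5, add_top] at hDtop; exact hDtop rfl
      have hA : {p | IsShortest w' s t p ∧ ¬ edgeOn p u v} = {p | IsShortest w s t p} := by
        ext p
        simp only [Set.mem_setOf_eq]
        constructor
        · rintro ⟨⟨hp, hwt⟩, hne⟩
          refine ⟨(isPath_transfer hsame hne).mp hp, ?_⟩
          rw [← pWeight_transfer hsame hne, hwt, hd']
        · rintro ⟨hp, hwt⟩
          have hne : ¬ edgeOn p u v := by
            intro he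
            have hlb := w_shortest_lb (w := w) hp he
            have hlt : dist w s u + w' u v + dist w v t < dist w s u + w u v + dist w v t := by
              exact ENNReal.add_lt_add_right hvt (ENNReal.add_lt_add_left hsu hdec)
            rw [hwt, h] at hlb
            exact absurd (lt_of_lt_of_le hlt hlb) (lt_irrefl _)
          exact ⟨⟨(isPath_transfer hsame hne).mpr hp, by
            rw [pWeight_transfer hsame hne, hwt, hd']⟩, hne⟩
      have hunion : {p | IsShortest w' s t p} =
          {p | IsShortest w' s t p ∧ ¬ edgeOn p u v} ∪
          {p | IsShortest w' s t p ∧ edgeOn p u v} := by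
        ext p
        simp only [Set.mem_setOf_eq, Set.mem_union]
        tauto
      have hfin : {p | IsShortest w' s t p}.Finite := shortest_finite s t hpos'
      have hdisj : Disjoint {p | IsShortest w' s t p ∧ ¬ edgeOn p u v}
          {p | IsShortest w' s t p ∧ edgeOn p u v} := by
        rw [Set.disjoint_left]
        rintro p ⟨-, hne⟩ ⟨-, he⟩
        exact hne he
      have hB := countB hpos hpos' hdec hsame s t (hd'.trans h) hDtop
      show Set.ncard {p | IsShortest w' s t p} = _
      rw [hunion, Set.ncard_union_eq hdisj
        (hfin.subset (by intro p hp; exact hp.1))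
        (hfin.subset (by intro p hp; exact hp.1)), hA, hB]
      rfl
  · -- Case 3 : D < d
    intro h
    have hd' : dist w' s t = dist w s u + w' u v + dist w v t := by
      rw [hC s t]; exact min_eq_right h.le
    refine ⟨hd', ?_⟩
    have hDtop : dist w s u + w' u v + dist w v t ≠ ⊤ := h.ne_top
    have hseteq : {p | IsShortest w' s t p} = {p | IsShortest w' s t p ∧ edgeOn p u v} := by
      ext p
      simp only [Set.mem_setOf_eq]
      constructor
      · intro hp
        refine ⟨hp, ?_⟩
        by_contra hne
        obtain ⟨hpath, hwt⟩ := hp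
        have hw : IsPath w s t p := (isPath_transfer hsame hne).mp hpath
        have := dist_le hw
        rw [← pWeight_transfer hsame hne, hwt, hd'] at this
        exact absurd (lt_of_le_of_lt this h) (lt_irrefl _)
      · exact fun hp => hp.1
    have hB := countB hpos hpos' hdec hsame s t hd' hDtop
    show Set.ncard {p | IsShortest w' s t p} = _
    rw [hseteq, hB]

end BC
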